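/- Let c be a positive integer and let G = (V, E) be a finite undirected graph on n vertices such that at least 3n/4 of its vertices have degree at least 4c. Let V_0 be the set of vertices of G that form trivial (singleton) c-edge-connected components. Then |V_0| ≤ 2n/3. -/

import Mathlib

open SimpleGraph

/-- The set of edges of `G` with exactly one endpoint in `A`: the edges of the
cut `(A, Aᶜ)`, also known as the boundary `∂_G(A)`. -/
def cutEdges {V : Type*} (G : SimpleGraph V) (A : Set V) : Set (Sym2 V) :=
  {e | e ∈ G.edgeSet ∧ ∃ u v, e = s(u, v) ∧ u ∈ A ∧ v ∉ A}

/-- `G` is `c`-edge-connected: every cut of `G` has at least `c` edges.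
(In particular a one-vertex graph is `c`-edge-connected.) -/
def IsCEdgeConn {V : Type*} (G : SimpleGraph V) (c : ℕ) : Prop :=
  ∀ A : Set V, A.Nonempty → Aᶜ.Nonempty → c ≤ (cutEdges G A).ncard

/-- `C` is (the vertex set of) a `c`-edge-connected component of `G`:
a maximal set of vertices whose induced subgraph is `c`-edge-connected. -/
def IsCComp {V : Type*} (G : SimpleGraph V) (c : ℕ) (C : Set V) : Prop :=
  C.Nonempty ∧ IsCEdgeConn (G.induce C) c ∧
    ∀ D : Set V, C ⊆ D → IsCEdgeConn (G.induce D) c → D = C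

/-- `u` and `v` are `c`-edge-connected in `G`: there exist `c` pairwise
edge-disjoint paths from `u` to `v`. -/
def CEdgeConnPair {V : Type*} (G : SimpleGraph V) (c : ℕ) (u v : V) : Prop :=
  ∃ P : Fin c → G.Walk u v, (∀ i, (P i).IsPath) ∧
    ∀ i j : Fin c, i ≠ j → ∀ e ∈ (P i).edges, e ∉ (P j).edges

namespace Stmt3Aux

variable {V : Type*} {α : Type*}

/-- The edges of `G` whose endpoints receive different colors under `χ`. -/
def crossSet (G : SimpleGraph V) (χ : V → α) : Set (Sym2 V) :=
  {e | ∃ u v, e = s(u, v) ∧ G.Adj u v ∧ χ u ≠ χ v}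

/-- The potential of a coloring: twice the number of crossing edges plus
`(2c-1)` times `n` minus the number of colors used. -/
noncomputable def pot [Fintype V] (G : SimpleGraph V) (c : ℕ) (χ : V → α) [DecidableEq α] : ℕ :=
  2 * (crossSet G χ).ncard + (2 * c - 1) * (Fintype.card V - (Finset.univ.image χ).card)

lemma crossSet_subset (G : SimpleGraph V) (χ χ' : V → α) (i j : α)
    (S : Set ↥(χ ⁻¹' {i}))
    (hχ'1 : ∀ v (hv : χ v = i), (⟨v, hv⟩ : ↥(χ ⁻¹' {i})) ∈ S → χ' v = j)
    (hχ'2 : ∀ v, (¬ ∃ hv : χ v = i, (⟨v, hv⟩ : ↥(χ ⁻¹' {i})) ∈ S) → χ' v = χ v) :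
    crossSet G χ' ⊆
      crossSet G χ ∪ (Sym2.map (Subtype.val)) '' cutEdges (G.induce (χ ⁻¹' {i})) S := by
  rintro e ⟨u, v, rfl, hadj, hne⟩
  by_cases hu : ∃ hv : χ u = i, (⟨u, hv⟩ : ↥(χ ⁻¹' {i})) ∈ S <;>
    by_cases hv : ∃ hv : χ v = i, (⟨v, hv⟩ : ↥(χ ⁻¹' {i})) ∈ S
  · exact absurd (by rw [hχ'1 u hu.1 hu.2, hχ'1 v hv.1 hv.2]) hne
  · rw [hχ'1 u hu.1 hu.2, hχ'2 v hv] at hne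
    by_cases hcc : χ u = χ v
    · right
      have hvi : χ v = i := hcc ▸ hu.1
      have hvS : (⟨v, hvi⟩ : ↥(χ ⁻¹' {i})) ∉ S := fun h => hv ⟨hvi, h⟩
      refine ⟨s((⟨u, hu.1⟩ : ↥(χ ⁻¹' {i})), ⟨v, hvi⟩), ⟨?_, ⟨_, _, rfl, hu.2, hvS⟩⟩, rfl⟩
      exact (SimpleGraph.mem_edgeSet _).2 hadj
    · exact Or.inl ⟨u, v, rfl, hadj, hcc⟩
  · rw [hχ'2 u hu, hχ'1 v hv.1 hv.2] at hne
    by_cases hcc : χ u = χ v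
    · right
      have hui : χ u = i := hcc.symm ▸ hv.1
      have huS : (⟨u, hui⟩ : ↥(χ ⁻¹' {i})) ∉ S := fun h => hu ⟨hui, h⟩
      refine ⟨s((⟨v, hv.1⟩ : ↥(χ ⁻¹' {i})), ⟨u, hui⟩), ⟨?_, ⟨_, _, rfl, hv.2, huS⟩⟩, ?_⟩
      · exact (SimpleGraph.mem_edgeSet _).2 hadj.symm
      · simp [Sym2.eq_swap]
    · exact Or.inl ⟨u, v, rfl, hadj, hcc⟩
  · rw [hχ'2 u hu, hχ'2 v hv] at hne
    exact Or.inl ⟨u, v, rfl, hadj, hne⟩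

lemma split [Fintype V] [DecidableEq α] (G : SimpleGraph V) (c : ℕ) (χ χ' : V → α)
    (i j : α) (hj : ∀ v, χ v ≠ j)
    (S : Set ↥(χ ⁻¹' {i}))
    (hS : S.Nonempty) (hS' : Sᶜ.Nonempty)
    (hcut : (cutEdges (G.induce (χ ⁻¹' {i})) S).ncard < c)
    (hχ'1 : ∀ v (hv : χ v = i), (⟨v, hv⟩ : ↥(χ ⁻¹' {i})) ∈ S → χ' v = j)
    (hχ'2 : ∀ v, (¬ ∃ hv : χ v = i, (⟨v, hv⟩ : ↥(χ ⁻¹' {i})) ∈ S) → χ' v = χ v) :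
    pot G c χ' + 1 ≤ pot G c χ := by
  have hc : 1 ≤ c := by omega
  have hcross : (crossSet G χ').ncard ≤ (crossSet G χ).ncard + (c - 1) := by
    calc (crossSet G χ').ncard
        ≤ (crossSet G χ ∪ (Sym2.map (Subtype.val)) ''
            cutEdges (G.induce (χ ⁻¹' {i})) S).ncard :=
          Set.ncard_le_ncard (crossSet_subset G χ χ' i j S hχ'1 hχ'2) (Set.toFinite _)
      _ ≤ (crossSet G χ).ncard +
            ((Sym2.map (Subtype.val)) '' cutEdges (G.induce (χ ⁻¹' {i})) S).ncard :=
          Set.ncard_union_le _ _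
      _ ≤ (crossSet G χ).ncard + (cutEdges (G.induce (χ ⁻¹' {i})) S).ncard :=
          Nat.add_le_add_left (Set.ncard_image_le (Set.toFinite _)) _
      _ ≤ (crossSet G χ).ncard + (c - 1) := by omega
  have hcard : (Finset.univ.image χ').card = (Finset.univ.image χ).card + 1 := by
    have hB1 : ∀ v ∈ (Subtype.val '' S : Set V), χ' v = j := by
      rintro v ⟨⟨w, hw⟩, hwS, rfl⟩; exact hχ'1 w hw hwS
    have hB2 : ∀ v ∉ (Subtype.val '' S : Set V), χ' v = χ v := by
      intro v hv
      refine hχ'2 v fun ⟨h1, h2⟩ => hv ⟨⟨v, h1⟩, h2, rfl⟩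
    have himg : Finset.univ.image χ' = insert j (Finset.univ.image χ) := by
      ext a
      simp only [Finset.mem_image, Finset.mem_univ, true_and, Finset.mem_insert]
      constructor
      · rintro ⟨w, rfl⟩
        by_cases hw : w ∈ (Subtype.val '' S : Set V)
        · exact Or.inl (hB1 w hw)
        · exact Or.inr ⟨w, (hB2 w hw).symm⟩
      · rintro (rfl | ⟨w, rfl⟩)
        · obtain ⟨⟨x, hx⟩, hxS⟩ := hS
          exact ⟨x, hB1 x ⟨⟨x, hx⟩, hxS, rfl⟩⟩
        · by_cases hw : w ∈ (Subtype.val '' S : Set V)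
          · obtain ⟨⟨y, hy⟩, hyS, rfl⟩ := hw
            obtain ⟨⟨x, hx⟩, hxS⟩ := hS'
            have hxB : x ∉ (Subtype.val '' S : Set V) := by
              rintro ⟨⟨z, hz⟩, hzS, h⟩
              exact hxS (by cases h; exact hzS)
            have hx' : χ x = i := hx
            have hy' : χ y = i := hy
            exact ⟨x, by rw [hB2 x hxB, hx', hy']⟩
          · exact ⟨w, hB2 w hw⟩
    rw [himg, Finset.card_insert_of_notMem (by simp [hj] : j ∉ Finset.univ.image χ)]
  have hk : (Finset.univ.image χ').card ≤ Fintype.card V := by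
    simpa using Finset.card_image_le (s := (Finset.univ : Finset V)) (f := χ')
  unfold pot
  set X := (crossSet G χ').ncard
  set Y := (crossSet G χ).ncard
  set k := (Finset.univ.image χ).card
  set n := Fintype.card V
  rw [hcard] at hk ⊢
  have hsplit : (2 * c - 1) * (n - k) = (2 * c - 1) * (n - (k + 1)) + (2 * c - 1) := by
    rw [show n - k = n - (k + 1) + 1 from by omega]; ring
  rw [hsplit]
  omega

lemma fibers_conn [Fintype V] [DecidableEq α] (G : SimpleGraph V) (c : ℕ) (χ : V → α)
    (hmin : ∀ χ'' : V → α, pot G c χ ≤ pot G c χ'')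
    (hfresh : ∃ j : α, ∀ v, χ v ≠ j) (w : V) :
    IsCEdgeConn (G.induce (χ ⁻¹' {χ w})) c := by
  classical
  by_contra hne
  simp only [IsCEdgeConn, not_forall, not_le] at hne
  obtain ⟨S, hS, hS', hcut⟩ := hne
  obtain ⟨j, hj⟩ := hfresh
  set χ' : V → α := fun v =>
    if h : ∃ hv : χ v = χ w, (⟨v, hv⟩ : ↥(χ ⁻¹' {χ w})) ∈ S then j else χ v with hχ'
  have h1 := split G c χ χ' (χ w) j hj S hS hS' hcut
    (fun v hv hvS => by simp only [hχ', dif_pos (⟨hv, hvS⟩ : ∃ h : χ v = χ w, _)])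
    (fun v hv => by simp only [hχ', dif_neg hv])
  have := hmin χ'
  omega

lemma degree_count [Fintype V] (G : SimpleGraph V) (c : ℕ) (χ : V → α)
    (T : Set V) (hTs : ∀ v ∈ T, ∀ u, χ u = χ v → u = v)
    (hTd : ∀ v ∈ T, 4 * c ≤ (G.neighborSet v).ncard) :
    4 * c * T.ncard ≤ 2 * (crossSet G χ).ncard := by
  classical
  set C : Finset (Sym2 V) := (Set.toFinite (crossSet G χ)).toFinset with hC
  set Tf : Finset V := (Set.toFinite T).toFinset with hT
  have step1 : ∀ v ∈ Tf, 4 * c ≤ (C.filter (fun e => v ∈ e)).card := by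
    intro v hv
    rw [Set.Finite.mem_toFinset] at hv
    have hdeg := hTd v hv
    rw [show (G.neighborSet v).ncard = (G.neighborFinset v).card from
      Set.ncard_eq_toFinset_card' _] at hdeg
    refine le_trans hdeg (Finset.card_le_card_of_injOn (fun u => s(v, u)) ?_ ?_)
    · intro u hu
      rw [Finset.mem_coe, SimpleGraph.mem_neighborFinset] at hu
      simp only [Finset.mem_coe, Finset.mem_filter, hC, Set.Finite.mem_toFinset]
      refine ⟨⟨v, u, rfl, hu, fun hcc => ?_⟩, Sym2.mem_mk_left _ _⟩
      exact G.ne_of_adj hu (hTs v hv u hcc.symm).symm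
    · intro a _ b _ hab
      rcases Sym2.eq_iff.mp hab with ⟨_, h⟩ | ⟨h1, h2⟩
      · exact h
      · exact h2.trans h1
  have step2 : ∑ v ∈ Tf, (C.filter (fun e => v ∈ e)).card ≤ 2 * C.card := by
    have hbd : ∀ e ∈ C, (Tf.filter (fun v => v ∈ e)).card ≤ 2 := by
      intro e _
      induction e with
      | _ a b =>
        refine le_trans (Finset.card_le_card (fun v hv => ?_))
          (Finset.card_insert_le a {b} |>.trans (by simp))
        rw [Finset.mem_filter] at hv
        simp only [Finset.mem_insert, Finset.mem_singleton]
        simpa [Sym2.mem_iff] using hv.2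
    calc ∑ v ∈ Tf, (C.filter (fun e => v ∈ e)).card
        = ∑ v ∈ Tf, ∑ e ∈ C, if v ∈ e then 1 else 0 :=
          Finset.sum_congr rfl (fun v _ => Finset.card_filter _ _)
      _ = ∑ e ∈ C, ∑ v ∈ Tf, if v ∈ e then 1 else 0 := Finset.sum_comm
      _ = ∑ e ∈ C, (Tf.filter (fun v => v ∈ e)).card :=
          Finset.sum_congr rfl (fun e _ => (Finset.card_filter _ _).symm)
      _ ≤ ∑ e ∈ C, 2 := Finset.sum_le_sum hbd
      _ = 2 * C.card := by rw [Finset.sum_const]; ring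
  have step3 : Tf.card * (4 * c) ≤ ∑ v ∈ Tf, (C.filter (fun e => v ∈ e)).card := by
    simpa using Finset.card_nsmul_le_sum Tf _ (4 * c) step1
  have hTc : T.ncard = Tf.card := Set.ncard_eq_toFinset_card _ _
  have hCc : (crossSet G χ).ncard = C.card := Set.ncard_eq_toFinset_card _ _
  rw [hTc, hCc]
  calc 4 * c * Tf.card = Tf.card * (4 * c) := by ring
    _ ≤ _ := step3
    _ ≤ 2 * C.card := step2

lemma parts_count [Fintype V] [DecidableEq α] (χ : V → α) :
    2 * (Finset.univ.image χ).card ≤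
      Fintype.card V + {v : V | ∀ u, χ u = χ v → u = v}.ncard := by
  classical
  set S : Set V := {v : V | ∀ u, χ u = χ v → u = v} with hS
  set Sf : Finset V := (Set.toFinite S).toFinset with hSf
  set SC : Finset α := Sf.image χ with hSC
  have hn : Fintype.card V
      = ∑ i ∈ Finset.univ.image χ, (Finset.univ.filter (fun v => χ v = i)).card := by
    rw [← Finset.card_univ]
    exact Finset.card_eq_sum_card_fiberwise
      (fun x _ => Finset.mem_image_of_mem _ (Finset.mem_univ x))
  have key : ∀ i ∈ Finset.univ.image χ,
      2 ≤ (Finset.univ.filter (fun v => χ v = i)).card + (if i ∈ SC then 1 else 0) := by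
    intro i hi
    obtain ⟨w, _, rfl⟩ := Finset.mem_image.mp hi
    have hw : w ∈ Finset.univ.filter (fun v => χ v = χ w) := by simp
    by_cases hiSC : χ w ∈ SC
    · rw [if_pos hiSC]
      have : 1 ≤ (Finset.univ.filter (fun v => χ v = χ w)).card :=
        Finset.card_pos.mpr ⟨w, hw⟩
      omega
    · rw [if_neg hiSC]
      by_contra hlt
      push_neg at hlt
      have hone : (Finset.univ.filter (fun v => χ v = χ w)).card ≤ 1 := by omega
      have hwS : w ∈ S := by
        intro u hu
        exact Finset.card_le_one.mp hone u (by simp [hu]) w hw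
      exact hiSC (Finset.mem_image_of_mem χ (by rw [hSf, Set.Finite.mem_toFinset]; exact hwS))
  have hsum : 2 * (Finset.univ.image χ).card ≤
      ∑ i ∈ Finset.univ.image χ,
        ((Finset.univ.filter (fun v => χ v = i)).card + (if i ∈ SC then 1 else 0)) := by
    calc 2 * (Finset.univ.image χ).card = ∑ _i ∈ Finset.univ.image χ, 2 := by
          rw [Finset.sum_const]; ring
      _ ≤ _ := Finset.sum_le_sum key
  rw [Finset.sum_add_distrib] at hsum
  have h2 : ∑ i ∈ Finset.univ.image χ, (if i ∈ SC then 1 else 0) ≤ Sf.card := by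
    calc ∑ i ∈ Finset.univ.image χ, (if i ∈ SC then 1 else 0)
        = ((Finset.univ.image χ).filter (fun i => i ∈ SC)).card :=
          (Finset.card_filter _ _).symm
      _ ≤ SC.card := Finset.card_le_card (fun i hi => (Finset.mem_filter.mp hi).2)
      _ ≤ Sf.card := Finset.card_image_le
  have hSc : S.ncard = Sf.card := Set.ncard_eq_toFinset_card _ _
  omega

end Stmt3Aux

open Stmt3Aux in
/-- if at least `3n/4` of the vertices of `G` have degree at least `4c`,
then the set `V₀` of vertices forming trivial (singleton) `c`-edge-connected components
satisfies `|V₀| ≤ 2n/3`. -/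
theorem stmt3 {V : Type*} [Fintype V] (c : ℕ) (hc : 0 < c) (G : SimpleGraph V)
    (hdeg : 3 * Fintype.card V ≤ 4 * {v : V | 4 * c ≤ (G.neighborSet v).ncard}.ncard) :
    3 * {v : V | IsCComp G c {v}}.ncard ≤ 2 * Fintype.card V := by
  classical
  set n := Fintype.card V with hn
  set H : Set V := {v : V | 4 * c ≤ (G.neighborSet v).ncard} with hH
  set V₀ : Set V := {v : V | IsCComp G c {v}} with hV₀
  have hV₀n : V₀.ncard ≤ n := by
    have := Set.ncard_le_ncard (Set.subset_univ V₀) (Set.toFinite _)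
    rwa [Set.ncard_univ, Nat.card_eq_fintype_card] at this
  rcases isEmpty_or_nonempty V with hV | hV
  · have : n = 0 := by rw [hn]; exact Fintype.card_eq_zero
    omega
  -- pick a coloring minimizing the potential
  obtain ⟨χ, -, hmin⟩ := Finset.exists_min_image (Finset.univ : Finset (V → Fin (n + 1)))
    (fun χ'' => pot G c χ'') Finset.univ_nonempty
  have hmin' : ∀ χ'' : V → Fin (n + 1), pot G c χ ≤ pot G c χ'' :=
    fun χ'' => hmin χ'' (Finset.mem_univ _)
  have hkn : (Finset.univ.image χ).card ≤ n := by
    simpa using Finset.card_image_le (s := (Finset.univ : Finset V)) (f := χ)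
  have hfresh : ∃ j : Fin (n + 1), ∀ v, χ v ≠ j := by
    obtain ⟨j, hj⟩ : ∃ j, j ∉ Finset.univ.image χ := by
      by_contra hx
      push_neg at hx
      have hsub : (Finset.univ : Finset (Fin (n + 1))) ⊆ Finset.univ.image χ :=
        fun j _ => hx j
      have := Finset.card_le_card hsub
      simp only [Finset.card_univ, Fintype.card_fin] at this
      omega
    exact ⟨j, fun v hv => hj (by simp [← hv])⟩
  have hconn : ∀ w : V, IsCEdgeConn (G.induce (χ ⁻¹' {χ w})) c :=
    fibers_conn G c χ hmin' hfresh
  set S : Set V := {v : V | ∀ u, χ u = χ v → u = v} with hSdef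
  -- each vertex of V₀ is alone in its color class
  have hV₀S : V₀ ⊆ S := by
    intro v hv
    have hv' : IsCComp G c {v} := hv
    obtain ⟨-, -, hmax⟩ := hv'
    have hA : χ ⁻¹' {χ v} = {v} :=
      hmax _ (Set.singleton_subset_iff.mpr rfl) (hconn v)
    intro u hu
    have : u ∈ χ ⁻¹' {χ v} := hu
    rw [hA] at this
    exact this
  -- number of colors
  have hk1 : 1 ≤ (Finset.univ.image χ).card :=
    Finset.card_pos.mpr (Finset.univ_nonempty.image χ)
  -- comparing with the constant coloring
  have hcrossk : 2 * (crossSet G χ).ncard ≤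
      (2 * c - 1) * ((Finset.univ.image χ).card - 1) := by
    have hconst := hmin' (fun _ => (0 : Fin (n + 1)))
    have hcross0 : crossSet G (fun _ : V => (0 : Fin (n + 1))) = ∅ := by
      ext e; simp [crossSet]
    have himg0 : (Finset.univ.image (fun _ : V => (0 : Fin (n + 1)))).card = 1 := by
      rw [Finset.image_const Finset.univ_nonempty]
      exact Finset.card_singleton _
    have hpot0 : pot G c (fun _ : V => (0 : Fin (n + 1))) = (2 * c - 1) * (n - 1) := by
      unfold pot
      rw [hcross0, himg0, Set.ncard_empty]
      ring
    rw [hpot0] at hconst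
    unfold pot at hconst
    set k := (Finset.univ.image χ).card
    have hsplit : (2 * c - 1) * (n - 1) = (2 * c - 1) * (n - k) + (2 * c - 1) * (k - 1) := by
      rw [show n - 1 = (n - k) + (k - 1) from by omega]; ring
    rw [hsplit] at hconst
    linarith [hconst]
  -- degree double counting
  have hdc : 4 * c * (S ∩ H).ncard ≤ 2 * (crossSet G χ).ncard :=
    degree_count G c χ (S ∩ H) (fun v hv u h => hv.1 u h) (fun v hv => hv.2)
  set k := (Finset.univ.image χ).card with hkdef
  set tH := (S ∩ H).ncard with htH
  have hkey : 2 * tH + 1 ≤ k := by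
    have h1 : 4 * c * tH ≤ (2 * c - 1) * (k - 1) := le_trans hdc hcrossk
    by_contra hcon
    push_neg at hcon
    obtain ⟨s, hs, hks⟩ : ∃ s, 1 ≤ s ∧ 2 * tH = (k - 1) + s :=
      ⟨2 * tH - (k - 1), by omega, by omega⟩
    set M := 2 * c - 1 with hMdef
    have hM : 2 * c = M + 1 := by omega
    have h2 : M * (k - 1) + (M * s + (k - 1) + s) = 4 * c * tH := by
      have h3 : 4 * c * tH = 2 * c * (2 * tH) := by ring
      rw [h3, hks, hM]; ring
    linarith [h1, h2, hs, Nat.zero_le (M * s), Nat.zero_le (k - 1)]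
  have hpc : 2 * k ≤ n + S.ncard := parts_count χ
  -- final accounting
  have e1 : (S ∩ H).ncard + (S \ H).ncard = S.ncard :=
    Set.ncard_inter_add_ncard_diff_eq_ncard S H
  have e2 : (S \ H).ncard + H.ncard ≤ n := by
    rw [← Set.ncard_union_eq Set.disjoint_sdiff_left]
    have := Set.ncard_le_ncard (Set.subset_univ (S \ H ∪ H)) (Set.toFinite _)
    rwa [Set.ncard_univ, Nat.card_eq_fintype_card] at this
  have e3 : (V₀ ∩ H).ncard + (V₀ \ H).ncard = V₀.ncard :=
    Set.ncard_inter_add_ncard_diff_eq_ncard V₀ H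
  have e4 : (V₀ ∩ H).ncard ≤ (S ∩ H).ncard :=
    Set.ncard_le_ncard (Set.inter_subset_inter_left _ hV₀S) (Set.toFinite _)
  have e5 : (V₀ \ H).ncard + H.ncard ≤ n := by
    rw [← Set.ncard_union_eq Set.disjoint_sdiff_left]
    have := Set.ncard_le_ncard (Set.subset_univ (V₀ \ H ∪ H)) (Set.toFinite _)
    rwa [Set.ncard_univ, Nat.card_eq_fintype_card] at this
  omega
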